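/- arXiv:1605.01068 — 3 statements merged into one kernel-verified Lean document; each statement's English description precedes it below -/
import Mathlib

section
/- Let d ≥ 2 divide n and let f_d(n) be the number of permutations in S_n all of whose cycle lengths are divisible by d. Then f_d(n) = (n-1)! · ∏_{j=1}^{n/d - 1} (1 + 1/(jd)). -/
/-- `fd d n` is the number of permutations of `n` points all of whose cycle
lengths (including fixed points, which are cycles of length 1) are divisible
by `d`. -/
noncomputable def fd (d n : ℕ) : ℕ :=
  Nat.card {π : Equiv.Perm (Fin n) // ∀ x, d ∣ Function.minimalPeriod (⇑π) x}


open Equiv Function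

section helpers
variable {α β : Type*}

lemma mp_transfer {f : α → α} {g : β → β} (e : α → β) (he : Function.Injective e)
    (x : α) (h : ∀ n, g^[n] (e x) = e (f^[n] x)) :
    Function.minimalPeriod g (e x) = Function.minimalPeriod f x := by
  have hiff : ∀ n, IsPeriodicPt g n (e x) ↔ IsPeriodicPt f n x := by
    intro n
    unfold IsPeriodicPt IsFixedPt
    rw [h n, he.eq_iff]
  by_cases hx : x ∈ periodicPts f
  · have hex : e x ∈ periodicPts g := by
      obtain ⟨n, hn, hpn⟩ := mem_periodicPts.mp hx
      exact mem_periodicPts.mpr ⟨n, hn, (hiff n).mpr hpn⟩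
    have h1 : minimalPeriod g (e x) ≤ minimalPeriod f x :=
      ((hiff _).mpr (isPeriodicPt_minimalPeriod f x)).minimalPeriod_le
        (minimalPeriod_pos_of_mem_periodicPts hx)
    have h2 : minimalPeriod f x ≤ minimalPeriod g (e x) :=
      ((hiff _).mp (isPeriodicPt_minimalPeriod g (e x))).minimalPeriod_le
        (minimalPeriod_pos_of_mem_periodicPts hex)
    omega
  · have hex : e x ∉ periodicPts g := by
      intro hc
      obtain ⟨n, hn, hpn⟩ := mem_periodicPts.mp hc
      exact hx (mem_periodicPts.mpr ⟨n, hn, (hiff n).mp hpn⟩)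
    rw [minimalPeriod_eq_zero_of_notMem_periodicPts hx,
      minimalPeriod_eq_zero_of_notMem_periodicPts hex]

lemma permCongr_iterate (e : α ≃ β) (π : Perm α) (x : α) (n : ℕ) :
    (⇑(e.permCongr π))^[n] (e x) = e ((⇑π)^[n] x) := by
  induction n with
  | zero => simp
  | succ n ih => rw [iterate_succ_apply', iterate_succ_apply', ih, permCongr_apply,
      e.symm_apply_apply]

lemma mp_permCongr (e : α ≃ β) (π : Perm α) (x : α) :
    Function.minimalPeriod ⇑(e.permCongr π) (e x) = Function.minimalPeriod ⇑π x :=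
  mp_transfer e e.injective x (permCongr_iterate e π x)

/-- permCongr as a MulEquiv -/
def permCongrMul (e : α ≃ β) : Perm α ≃* Perm β :=
  { e.permCongr with
    map_mul' := fun p q => by
      ext b
      simp [permCongr_apply, Perm.mul_apply] }

lemma permCongr_zpow (e : α ≃ β) (π : Perm α) (i : ℤ) :
    e.permCongr (π ^ i) = (e.permCongr π) ^ i := by
  have hc : ∀ σ : Perm α, (permCongrMul e) σ = e.permCongr σ := fun _ => rfl
  rw [← hc, ← hc, map_zpow]

lemma sameCycle_permCongr (e : α ≃ β) (π : Perm α) (x y : α) :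
    (e.permCongr π).SameCycle (e x) (e y) ↔ π.SameCycle x y := by
  constructor
  · rintro ⟨i, hi⟩
    refine ⟨i, ?_⟩
    rw [← permCongr_zpow, permCongr_apply, e.symm_apply_apply] at hi
    exact e.injective hi
  · rintro ⟨i, hi⟩
    refine ⟨i, ?_⟩
    rw [← permCongr_zpow, permCongr_apply, e.symm_apply_apply, hi]

lemma perm_mem_periodicPts [Finite α] (π : Perm α) (x : α) : x ∈ periodicPts ⇑π := by
  refine mem_periodicPts.mpr ⟨orderOf π, orderOf_pos π, ?_⟩
  unfold IsPeriodicPt IsFixedPt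
  rw [Equiv.Perm.iterate_eq_pow, pow_orderOf_eq_one]
  rfl

lemma mp_sameCycle [Finite α] (π : Perm α) {x y : α} (h : π.SameCycle x y) :
    Function.minimalPeriod ⇑π y = Function.minimalPeriod ⇑π x := by
  obtain ⟨i, hlt, hi⟩ := h.exists_pow_eq'
  rw [← hi]
  have : ⇑(π ^ i) x = (⇑π)^[i] x := rfl
  rw [this]
  exact Function.minimalPeriod_apply_iterate (perm_mem_periodicPts π x) i

end helpers


open Equiv Function

section sigma_analysis
variable {α : Type*} [DecidableEq α] [Fintype α] (τ : Equiv.Perm α) (a : α)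

local notation "σ" => Equiv.swap (none : Option α) (some a) * Equiv.optionCongr τ

lemma sg_apply_none : σ none = some a := by
  simp [Equiv.Perm.mul_apply]

lemma sg_apply_some (x : α) : σ (some x) = if τ x = a then none else some (τ x) := by
  by_cases h : τ x = a
  · simp [Equiv.Perm.mul_apply, h]
  · simp [Equiv.Perm.mul_apply, h, Equiv.swap_apply_of_ne_of_ne]

lemma sg_orbit (k : ℕ) (hk : ∀ j, 1 ≤ j → j ≤ k → (τ ^ j) a ≠ a) :
    (σ ^ (k+1)) none = some ((τ ^ k) a) := by
  induction k with
  | zero => simpa using sg_apply_none τ a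
  | succ k ih =>
    have ih' := ih (fun j h1 h2 => hk j h1 (h2.trans (Nat.le_succ k)))
    rw [pow_succ', Equiv.Perm.mul_apply, ih', sg_apply_some]
    have : τ ((τ ^ k) a) = (τ ^ (k+1)) a := by
      rw [pow_succ', Equiv.Perm.mul_apply]
    rw [this, if_neg (hk (k+1) (by omega) le_rfl)]

end sigma_analysis
section sigma2
variable {α : Type*} [DecidableEq α] [Fintype α] (τ : Equiv.Perm α) (a : α)

local notation "σ" => Equiv.swap (none : Option α) (some a) * Equiv.optionCongr τ

lemma perm_mem_periodicPts' (π : Equiv.Perm α) (x : α) : x ∈ periodicPts ⇑π := by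
  refine mem_periodicPts.mpr ⟨orderOf π, orderOf_pos π, ?_⟩
  show ⇑(π ^ orderOf π) x = x
  rw [pow_orderOf_eq_one]; rfl

lemma sg_mp_none : minimalPeriod ⇑σ none = minimalPeriod ⇑τ a + 1 := by
  set L := minimalPeriod ⇑τ a with hLdef
  have hL : 0 < L := minimalPeriod_pos_of_mem_periodicPts (perm_mem_periodicPts' τ a)
  have hne : ∀ j, 1 ≤ j → j ≤ L - 1 → (τ ^ j) a ≠ a := by
    intro j h1 h2 hc
    exact not_isPeriodicPt_of_pos_of_lt_minimalPeriod (by omega) (by omega)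
      (show IsPeriodicPt ⇑τ j a from hc)
  have horb : (σ ^ L) none = some ((τ ^ (L-1)) a) := by
    have := sg_orbit τ a (L-1) hne
    rwa [Nat.sub_add_cancel hL] at this
  have hper : (σ ^ (L+1)) none = none := by
    rw [pow_succ', Equiv.Perm.mul_apply, horb, sg_apply_some]
    have : τ ((τ ^ (L-1)) a) = (τ ^ L) a := by
      rw [← Equiv.Perm.mul_apply, ← pow_succ', Nat.sub_add_cancel hL]
    have hLa : (τ ^ L) a = a := isPeriodicPt_minimalPeriod ⇑τ a
    rw [this, if_pos hLa]
  have hperiodic : IsPeriodicPt ⇑σ (L+1) none := hper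
  have hub : minimalPeriod ⇑σ none ≤ L + 1 := hperiodic.minimalPeriod_le (by omega)
  have hpos : 0 < minimalPeriod ⇑σ none :=
    minimalPeriod_pos_of_mem_periodicPts (perm_mem_periodicPts' _ none)
  by_contra hne'
  have hlt : minimalPeriod ⇑σ none ≤ L := by omega
  have hmp : (σ ^ (minimalPeriod ⇑σ none)) none = none := isPeriodicPt_minimalPeriod ⇑σ none
  have := sg_orbit τ a (minimalPeriod ⇑σ none - 1)
    (fun j h1 h2 => hne j h1 (by omega))
  rw [Nat.sub_add_cancel hpos, hmp] at this
  exact Option.some_ne_none _ this.symm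

lemma sg_mp_some (x : α) (hx : ¬ τ.SameCycle x a) :
    minimalPeriod ⇑σ (some x) = minimalPeriod ⇑τ x := by
  refine mp_transfer some (Option.some_injective α) x ?_
  intro n
  induction n with
  | zero => rfl
  | succ n ih =>
    rw [iterate_succ_apply', iterate_succ_apply', ih, sg_apply_some]
    rw [if_neg]
    intro hc
    apply hx
    refine ⟨(n+1 : ℕ), ?_⟩
    rw [zpow_natCast]
    show (⇑τ)^[n+1] x = a
    rw [iterate_succ_apply', hc]

lemma sg_sameCycle (x : α) : Equiv.Perm.SameCycle σ none (some x) ↔ τ.SameCycle a x := by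
  constructor
  · intro h
    obtain ⟨i, _, hi⟩ := h.exists_pow_eq'
    have aux : ∀ j : ℕ, (σ ^ j) none = none ∨ ∃ k : ℕ, (σ ^ j) none = some ((τ ^ k) a) := by
      intro j
      induction j with
      | zero => exact Or.inl rfl
      | succ j ih =>
        rw [pow_succ', Equiv.Perm.mul_apply]
        rcases ih with h0 | ⟨k, hk⟩
        · rw [h0]
          exact Or.inr ⟨0, by simpa using sg_apply_none τ a⟩
        · rw [hk, sg_apply_some]
          by_cases hc : τ ((τ ^ k) a) = a
          · rw [if_pos hc]; exact Or.inl rfl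
          · rw [if_neg hc]
            refine Or.inr ⟨k+1, ?_⟩
            rw [← Equiv.Perm.mul_apply, ← pow_succ']
    rcases aux i with h0 | ⟨k, hk⟩
    · rw [h0] at hi; exact absurd hi.symm (Option.some_ne_none _)
    · rw [hk] at hi
      refine ⟨(k : ℕ), ?_⟩
      rw [zpow_natCast]
      exact Option.some_injective _ hi
  · intro h
    obtain ⟨i, _, hi⟩ := h.exists_pow_eq'
    set L := minimalPeriod ⇑τ a with hLdef
    have hL : 0 < L := minimalPeriod_pos_of_mem_periodicPts (perm_mem_periodicPts' τ a)
    have hk : (τ ^ (i % L)) a = (τ ^ i) a :=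
      (isPeriodicPt_minimalPeriod ⇑τ a).iterate_mod_apply i
    have hne : ∀ j, 1 ≤ j → j ≤ i % L → (τ ^ j) a ≠ a := by
      intro j h1 h2 hc
      have hjL : j < L := lt_of_le_of_lt h2 (Nat.mod_lt _ hL)
      exact not_isPeriodicPt_of_pos_of_lt_minimalPeriod (by omega) hjL
        (show IsPeriodicPt ⇑τ j a from hc)
    refine ⟨((i % L) + 1 : ℕ), ?_⟩
    rw [zpow_natCast, sg_orbit τ a (i % L) hne, hk, hi]

lemma oc_mp_none : minimalPeriod ⇑(Equiv.optionCongr τ) (none : Option α) = 1 :=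
  minimalPeriod_eq_one_iff_isFixedPt.mpr (show Equiv.optionCongr τ none = none by simp)

lemma oc_mp_some (x : α) :
    minimalPeriod ⇑(Equiv.optionCongr τ) (some x) = minimalPeriod ⇑τ x := by
  refine mp_transfer some (Option.some_injective α) x ?_
  intro n
  induction n with
  | zero => rfl
  | succ n ih => rw [iterate_succ_apply', iterate_succ_apply', ih]; simp

lemma oc_not_sameCycle (x : α) :
    ¬ Equiv.Perm.SameCycle (Equiv.optionCongr τ) none (some x) := by
  rintro ⟨i, hi⟩
  rw [Equiv.Perm.zpow_apply_eq_self_of_apply_eq_self (show Equiv.optionCongr τ none = none by simp)] at hi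
  exact Option.some_ne_none _ hi.symm

end sigma2
section counting
open Equiv Function


noncomputable def gg (d r n : ℕ) : ℕ :=
  Nat.card {π : Equiv.Perm (Option (Fin n)) //
    (∀ x : Fin n, ¬ π.SameCycle none (some x) → d ∣ minimalPeriod ⇑π (some x)) ∧
    minimalPeriod ⇑π none % d = r % d}

lemma natCard_sigma {ι : Type*} [Fintype ι] (f : ι → Type*) [∀ i, Fintype (f i)] :
    Nat.card (Σ i, f i) = ∑ i, Nat.card (f i) := by
  simp [Nat.card_eq_fintype_card]

lemma fd_zero (d : ℕ) : fd d 0 = 1 := by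
  rw [fd]
  rw [Nat.card_eq_one_iff_unique]
  constructor
  · constructor
    rintro ⟨π, hπ⟩ ⟨π', hπ'⟩
    have : π = π' := by
      ext x
      exact absurd x.2 (by omega)
    simp [this]
  · exact ⟨⟨1, fun x => absurd x.2 (by omega)⟩⟩

lemma fd_eq (d n : ℕ) (hd : 2 ≤ d) : fd d (n+1) = gg d 0 n := by
  classical
  have e := finSuccEquiv n
  rw [fd, gg]
  have step1 :
      Nat.card {π : Equiv.Perm (Fin (n+1)) // ∀ x, d ∣ minimalPeriod ⇑π x} =
      Nat.card {ρ : Equiv.Perm (Option (Fin n)) // ∀ y, d ∣ minimalPeriod ⇑ρ y} := by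
    refine Nat.card_congr (Equiv.subtypeEquiv e.permCongr fun π => ?_)
    constructor
    · intro h y
      have h2 := mp_permCongr e π (e.symm y)
      rw [e.apply_symm_apply] at h2
      rw [h2]; exact h _
    · intro h x
      have h2 := mp_permCongr e π x
      rw [← h2]; exact h _
  rw [step1]
  refine Nat.card_congr (Equiv.subtypeEquivRight fun ρ => ?_)
  constructor
  · intro h
    refine ⟨fun x _ => h (some x), ?_⟩
    rw [Nat.zero_mod]
    exact (Nat.modEq_zero_iff_dvd).mpr (h none)
  · rintro ⟨h1, h2⟩ y
    have hnone : d ∣ minimalPeriod ⇑ρ none := by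
      rw [← Nat.modEq_zero_iff_dvd]
      show _ % d = 0 % d
      rwa [Nat.zero_mod]
    cases y with
    | none => exact hnone
    | some x =>
      by_cases hsc : ρ.SameCycle none (some x)
      · rw [mp_sameCycle ρ hsc]
        exact hnone
      · exact h1 x hsc

end counting
section recursion
open Equiv Function

lemma mod_succ_iff (d r m : ℕ) : (m + 1) % d = (r + 1) % d ↔ m % d = r % d := by
  constructor
  · intro h
    exact Nat.ModEq.add_right_cancel' 1 h
  · intro h
    exact Nat.ModEq.add_right 1 h

lemma gg_succ (d : ℕ) (hd : 2 ≤ d) (r n : ℕ) :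
    gg d (r+1) (n+1) = (if d ∣ r then fd d (n+1) else 0) + (n+1) * gg d r n := by
  classical
  set α := Fin (n+1)
  set Cond : Equiv.Perm (Option α) → Prop := fun π =>
    (∀ x : α, ¬ π.SameCycle none (some x) → d ∣ minimalPeriod ⇑π (some x)) ∧
    minimalPeriod ⇑π none % d = (r+1) % d with hCond
  have h1 : gg d (r+1) (n+1) = Nat.card {p : Option α × Equiv.Perm α //
      Cond (Equiv.Perm.decomposeOption.symm p)} := by
    rw [gg]
    exact Nat.card_congr (Equiv.subtypeEquiv Equiv.Perm.decomposeOption fun π => by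
      rw [Equiv.symm_apply_apply])
  have h2 : Nat.card {p : Option α × Equiv.Perm α // Cond (Equiv.Perm.decomposeOption.symm p)}
      = Nat.card (Σ s : Option α, {τ : Equiv.Perm α //
          Cond (Equiv.Perm.decomposeOption.symm (s, τ))}) :=
    Nat.card_congr ((Equiv.subtypeEquivRight (fun p => by rw [Prod.mk.eta])).trans
      (Equiv.subtypeProdEquivSigmaSubtype
        (fun s τ => Cond (Equiv.Perm.decomposeOption.symm (s, τ)))))
  have h3 : Nat.card (Σ s : Option α, {τ : Equiv.Perm α //
        Cond (Equiv.Perm.decomposeOption.symm (s, τ))})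
      = ∑ s : Option α, Nat.card {τ : Equiv.Perm α //
          Cond (Equiv.Perm.decomposeOption.symm (s, τ))} :=
    natCard_sigma _
  have hsymm : ∀ (s : Option α) (τ : Equiv.Perm α),
      Equiv.Perm.decomposeOption.symm (s, τ) = Equiv.swap none s * τ.optionCongr := fun s τ => rfl
  -- none case
  have hnone : Nat.card {τ : Equiv.Perm α //
      Cond (Equiv.Perm.decomposeOption.symm (none, τ))}
      = if d ∣ r then fd d (n+1) else 0 := by
    have hc : ∀ τ : Equiv.Perm α, Cond (Equiv.Perm.decomposeOption.symm (none, τ)) ↔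
        ((∀ x : α, d ∣ minimalPeriod ⇑τ x) ∧ d ∣ r) := by
      intro τ
      rw [hsymm]
      have hρ : Equiv.swap (none : Option α) none * τ.optionCongr = τ.optionCongr := by
        rw [Equiv.swap_self]
        ext y; rfl
      rw [hρ, hCond]
      simp only [oc_mp_none]
      constructor
      · rintro ⟨ha, hb⟩
        refine ⟨fun x => ?_, ?_⟩
        · rw [← oc_mp_some τ x]
          exact ha x (oc_not_sameCycle τ x)
        · have h' : (0 + 1) % d = (r + 1) % d := by simpa using hb
          have h2 := (mod_succ_iff d r 0).mp h'
          rw [Nat.zero_mod] at h2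
          exact Nat.dvd_of_mod_eq_zero h2.symm
      · rintro ⟨ha, hb⟩
        refine ⟨fun x _ => by rw [oc_mp_some]; exact ha x, ?_⟩
        have h0 : (0 : ℕ) % d = r % d := by
          obtain ⟨k, rfl⟩ := hb
          simp [Nat.mul_mod_right]
        have h2 := (mod_succ_iff d r 0).mpr h0
        simpa using h2
    by_cases hdr : d ∣ r
    · rw [if_pos hdr]
      rw [fd]
      refine Nat.card_congr (Equiv.subtypeEquivRight fun τ => ?_)
      rw [hc τ]
      exact ⟨fun h => h.1, fun h => ⟨h, hdr⟩⟩
    · rw [if_neg hdr]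
      have : IsEmpty {τ : Equiv.Perm α // Cond (Equiv.Perm.decomposeOption.symm (none, τ))} := by
        constructor
        rintro ⟨τ, hτ⟩
        exact hdr ((hc τ).mp hτ).2
      exact Nat.card_of_isEmpty
  -- some case
  have hsome : ∀ a : α, Nat.card {τ : Equiv.Perm α //
      Cond (Equiv.Perm.decomposeOption.symm (some a, τ))} = gg d r n := by
    intro a
    have hc : ∀ τ : Equiv.Perm α, Cond (Equiv.Perm.decomposeOption.symm (some a, τ)) ↔
        ((∀ x : α, ¬ τ.SameCycle a x → d ∣ minimalPeriod ⇑τ x) ∧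
          minimalPeriod ⇑τ a % d = r % d) := by
      intro τ
      rw [hsymm, hCond]
      constructor
      · rintro ⟨ha, hb⟩
        refine ⟨fun x hx => ?_, ?_⟩
        · rw [← sg_mp_some τ a x (fun hc' => hx hc'.symm)]
          exact ha x (fun hc' => hx ((sg_sameCycle τ a x).mp hc'))
        · rw [sg_mp_none τ a] at hb
          exact (mod_succ_iff d r _).mp hb
      · rintro ⟨ha, hb⟩
        refine ⟨fun x hx => ?_, ?_⟩
        · have hnsc : ¬ τ.SameCycle a x := fun hc' => hx ((sg_sameCycle τ a x).mpr hc')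
          rw [sg_mp_some τ a x (fun hc' => hnsc hc'.symm)]
          exact ha x hnsc
        · rw [sg_mp_none τ a]
          exact (mod_succ_iff d r _).mpr hb
    -- transport along e_a : α ≃ Option (Fin n), a ↦ none
    set ea : α ≃ Option (Fin n) := (Equiv.swap a 0).trans (finSuccEquiv n) with hea
    have hea0 : ea a = none := by
      rw [hea]
      simp only [Equiv.trans_apply, Equiv.swap_apply_left]
      exact finSuccEquiv_zero
    rw [gg]
    refine Nat.card_congr ?_
    refine Equiv.subtypeEquiv ea.permCongr fun τ => ?_
    rw [hc τ]
    set ρ := ea.permCongr τ with hρ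
    constructor
    · rintro ⟨ha, hb⟩
      refine ⟨fun x hx => ?_, ?_⟩
      · set x' := ea.symm (some x) with hx'
        have hxx : ea x' = some x := ea.apply_symm_apply _
        have hnsc : ¬ τ.SameCycle a x' := by
          intro hcc
          apply hx
          rw [← hea0, ← hxx]
          exact (sameCycle_permCongr ea τ a x').mpr hcc
        have := mp_permCongr ea τ x'
        rw [hxx] at this
        rw [this]
        exact ha x' hnsc
      · have := mp_permCongr ea τ a
        rw [hea0] at this
        rw [this]
        exact hb
    · rintro ⟨ha, hb⟩
      refine ⟨fun x' hnsc => ?_, ?_⟩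
      · have hxa : x' ≠ a := fun h => hnsc (h ▸ Equiv.Perm.SameCycle.refl τ a)
        have hne : ea x' ≠ none := by
          rw [← hea0]
          exact fun h => hxa (ea.injective h)
        obtain ⟨x, hx⟩ : ∃ x, ea x' = some x := by
          cases h : ea x' with
          | none => exact absurd h hne
          | some x => exact ⟨x, rfl⟩
        have hmp := mp_permCongr ea τ x'
        rw [hx] at hmp
        rw [← hmp]
        apply ha x
        intro hcc
        apply hnsc
        rw [← hea0, ← hx] at hcc
        exact (sameCycle_permCongr ea τ a x').mp hcc
      · have := mp_permCongr ea τ a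
        rw [hea0] at this
        rw [← this]
        exact hb
  rw [h1, h2, h3, Fintype.sum_option, hnone]
  congr 1
  rw [Finset.sum_congr rfl (fun a _ => hsome a), Finset.sum_const, Finset.card_univ,
    Fintype.card_fin]
  simp [mul_comm]

end recursion
section arith
open Equiv Function Finset

lemma gg_one_zero (d : ℕ) (hd : 2 ≤ d) : gg d 1 0 = 1 := by
  rw [gg, Nat.card_eq_one_iff_unique]
  have hperm : ∀ π : Equiv.Perm (Option (Fin 0)), π = 1 := by
    intro π
    apply Equiv.ext
    intro y
    cases y with
    | some x => exact x.elim0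
    | none =>
      show π none = none
      cases h : π none with
      | some x => exact x.elim0
      | none => rfl
  have hmp : minimalPeriod ⇑(1 : Equiv.Perm (Option (Fin 0))) (none : Option (Fin 0)) = 1 :=
    minimalPeriod_eq_one_iff_isFixedPt.mpr rfl
  constructor
  · constructor
    rintro ⟨π, hπ⟩ ⟨π', hπ'⟩
    exact Subtype.ext ((hperm π).trans (hperm π').symm)
  · refine ⟨⟨1, fun x => x.elim0, ?_⟩⟩
    rw [hmp]

lemma gg_congr (d r₁ r₂ n : ℕ) (h : r₁ % d = r₂ % d) : gg d r₁ n = gg d r₂ n := by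
  rw [gg, gg]
  exact Nat.card_congr (Equiv.subtypeEquivRight fun π => by rw [h])

lemma gg_one (d : ℕ) (hd : 2 ≤ d) (n : ℕ) : gg d 1 n = (n+1) * fd d n := by
  cases n with
  | zero => rw [gg_one_zero d hd, fd_zero]
  | succ n =>
    have h := gg_succ d hd 0 n
    rw [if_pos (dvd_zero d), ← fd_eq d n hd] at h
    have h2 : gg d 1 (n+1) = fd d (n+1) + (n+1) * fd d (n+1) := by simpa using h
    rw [h2]
    ring

lemma gg_descent (d : ℕ) (hd : 2 ≤ d) :
    ∀ i, i < d → ∀ n, gg d (i+1) (n+i) = (∏ t ∈ Finset.range i, (n+1+t)) * gg d 1 n := by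
  intro i
  induction i with
  | zero => intro _ n; simp
  | succ i ih =>
    intro hi n
    have h := gg_succ d hd (i+1) (n+i)
    have hnd : ¬ d ∣ (i+1) := by
      intro hc
      have := Nat.le_of_dvd (by omega) hc
      omega
    rw [if_neg hnd] at h
    have : n + (i+1) = (n+i) + 1 := by omega
    rw [this, h, ih (by omega) n, Finset.prod_range_succ]
    ring

lemma fd_step (d : ℕ) (hd : 2 ≤ d) (m : ℕ) :
    fd d (d*(m+1)) = ((d*m+1) * ∏ t ∈ Finset.range (d-1), (d*m+1+t)) * fd d (d*m) := by
  have h1 : d*(m+1) = (d*m + (d-1)) + 1 := by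
    rw [Nat.mul_succ]
    have : 1 ≤ d := by omega
    omega
  rw [h1, fd_eq d _ hd, gg_congr d 0 ((d-1)+1) _ (by
    have : (d-1)+1 = d := by omega
    rw [this, Nat.mod_self, Nat.zero_mod]),
    gg_descent d hd (d-1) (by omega) (d*m), gg_one d hd]
  ring

lemma block_prod (d : ℕ) (hd : 2 ≤ d) (m : ℕ) :
    ∏ k ∈ Finset.Ico (d*m) (d*m+d), (k + if d ∣ k then 1 else 0)
      = (d*m+1) * ∏ t ∈ Finset.range (d-1), (d*m+1+t) := by
  rw [Finset.prod_eq_prod_Ico_succ_bot (show d*m < d*m+d by omega)]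
  have hf : d*m + (if d ∣ d*m then 1 else 0) = d*m+1 := by
    rw [if_pos (dvd_mul_right d m)]
  rw [hf]
  congr 1
  have hc : ∀ k ∈ Finset.Ico (d*m+1) (d*m+d), (k + if d ∣ k then 1 else 0) = k := by
    intro k hk
    rw [Finset.mem_Ico] at hk
    rw [if_neg, Nat.add_zero]
    rintro ⟨j, rfl⟩
    have h2 : m < j := by
      by_contra hc
      push_neg at hc
      have := Nat.mul_le_mul_left d hc
      omega
    have h3 : j < m + 1 := by
      by_contra hc
      push_neg at hc
      have := Nat.mul_le_mul_left d hc
      rw [Nat.mul_succ] at this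
      omega
    omega
  rw [Finset.prod_congr rfl hc, Finset.prod_Ico_eq_prod_range]
  rw [Nat.add_sub_add_left]

lemma fd_prod (d : ℕ) (hd : 2 ≤ d) :
    ∀ m, fd d (d*m) = ∏ k ∈ Finset.Ico 0 (d*m), (k + if d ∣ k then 1 else 0) := by
  intro m
  induction m with
  | zero => simp [fd_zero]
  | succ m ih =>
    rw [fd_step d hd m, ih, ← block_prod d hd m, mul_comm,
      Finset.prod_Ico_consecutive _ (Nat.zero_le _) (Nat.le_add_right _ _)]
    rw [Nat.mul_succ]

end arith
theorem stmt_2 (d n : ℕ) (hd : 2 ≤ d) (hdn : d ∣ n) (hn : 0 < n) :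
    (fd d n : ℝ) =
      ((n - 1).factorial : ℝ) * ∏ j ∈ Finset.Icc 1 (n / d - 1), (1 + 1 / ((j : ℝ) * d)) := by
  obtain ⟨m, rfl⟩ := hdn
  have hm : 1 ≤ m := by
    rcases Nat.eq_zero_or_pos m with h | h
    · subst h; simp at hn
    · exact h
  have hnd : (d*m)/d = m := Nat.mul_div_cancel_left m (by omega)
  rw [hnd, fd_prod d hd m]
  have hN1 : 1 ≤ d*m := by
    calc 1 = 1*1 := by norm_num
    _ ≤ d*m := Nat.mul_le_mul (by omega) hm
  rw [Nat.cast_prod]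
  rw [Finset.prod_eq_prod_Ico_succ_bot (show 0 < d*m by omega) (fun k => ((k + if d ∣ k then 1 else 0 : ℕ) : ℝ))]
  have h0 : ((0 + if d ∣ 0 then 1 else 0 : ℕ) : ℝ) = 1 := by
    rw [if_pos (dvd_zero d)]; norm_num
  rw [h0, one_mul]
  have hsplit : ∀ k ∈ Finset.Ico 1 (d*m), ((k + if d ∣ k then 1 else 0 : ℕ) : ℝ)
      = (k : ℝ) * (if d ∣ k then (1 + 1/(k:ℝ)) else 1) := by
    intro k hk
    rw [Finset.mem_Ico] at hk
    have hk0 : (k:ℝ) ≠ 0 := Nat.cast_ne_zero.mpr (by omega)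
    by_cases h : d ∣ k
    · rw [if_pos h, if_pos h]
      push_cast
      field_simp
    · rw [if_neg h, if_neg h]
      push_cast
      ring
  rw [Finset.prod_congr rfl hsplit, Finset.prod_mul_distrib]
  congr 1
  · have h1 : ∏ k ∈ Finset.Ico 1 (d*m), k = (d*m-1).factorial := by
      have h2 := Finset.prod_Ico_id_eq_factorial (d*m-1)
      rwa [Nat.sub_add_cancel hN1] at h2
    rw [← h1, Nat.cast_prod]
  · rw [← Finset.prod_filter]
    refine (Finset.prod_bij (fun j _ => d*j) ?_ ?_ ?_ ?_).symm
    · intro j hj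
      rw [Finset.mem_Icc] at hj
      rw [Finset.mem_filter, Finset.mem_Ico]
      refine ⟨⟨?_, ?_⟩, dvd_mul_right d j⟩
      · calc 1 = 1*1 := by norm_num
        _ ≤ d*j := Nat.mul_le_mul (by omega) hj.1
      · have hjm : j < m := by
          have := hj.2
          omega
        exact (Nat.mul_lt_mul_left (show 0 < d by omega)).mpr hjm
    · intro j1 h1 j2 h2 he
      exact Nat.eq_of_mul_eq_mul_left (by omega) he
    · intro k hk
      rw [Finset.mem_filter, Finset.mem_Ico] at hk
      obtain ⟨⟨hk1, hk2⟩, j, rfl⟩ := hk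
      have hj1 : 1 ≤ j := by
        by_contra hc
        push_neg at hc
        interval_cases j
        omega
      have hj2 : j < m := by
        by_contra hc
        push_neg at hc
        have := Nat.mul_le_mul_left d hc
        omega
      exact ⟨j, Finset.mem_Icc.mpr ⟨hj1, by omega⟩, rfl⟩
    · intro j hj
      push_cast
      rw [mul_comm]
end

section
/- Let X_1,…,X_k be independent Poisson random variables with E X_j = 1/j and let L_m(c) be as defined via column-sum-constrained nonnegative integer matrices. For distinct j_1,…,j_h ≤ k and positive integers a_1,…,a_h: E[|L_m(X)|·X_{j_1}^{a_1}⋯X_{j_h}^{a_h}] ≤ (e^{m(2^{a_1}+⋯+2^{a_h})}/(j_1⋯j_h)) · E|L_m(X)|. -/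
/-- `Lset m k c` is the set of `m`-tuples `(∑ j, j * x i j)_i` (with `j` ranging over
`1, …, k`) as `x` ranges over `m × k` matrices of nonnegative integers whose `j`-th
column sums to `c j`. -/
def Lset (m k : ℕ) (c : Fin k → ℕ) : Set (Fin m → ℕ) :=
  {v | ∃ x : Fin m → Fin k → ℕ,
        (∀ j, ∑ i, x i j = c j) ∧ ∀ i, v i = ∑ j, (j.val + 1) * x i j}

/-- The Poisson probability mass function with mean `μ`. -/
noncomputable def poissonP (μ : ℝ) (r : ℕ) : ℝ :=
  Real.exp (-μ) * μ ^ r / r.factorial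

/-- The expectation of `f (X 1, …, X k)` where `X 1, …, X k` are independent
Poisson random variables with `E (X j) = 1 / j`.  (The variable indexed by
`j : Fin k` is Poisson with mean `1 / (j + 1)`.) -/
noncomputable def pexp (k : ℕ) (f : (Fin k → ℕ) → ℝ) : ℝ :=
  ∑' c : Fin k → ℕ, (∏ j : Fin k, poissonP (1 / ((j : ℕ) + 1 : ℝ)) (c j)) * f c

open scoped ENNReal NNReal


lemma poissonP_nonneg {μ : ℝ} (hμ : 0 ≤ μ) (r : ℕ) : 0 ≤ poissonP μ r := by
  unfold poissonP; positivity

lemma poissonP_succ_mul (μ : ℝ) (s : ℕ) :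
    poissonP μ (s + 1) * (s + 1) = μ * poissonP μ s := by
  unfold poissonP
  rw [Nat.factorial_succ]
  have h2 : (s.factorial : ℝ) ≠ 0 := by positivity
  push_cast
  field_simp
  ring

lemma poissonP_shift (μ : ℝ) (n r : ℕ) :
    poissonP μ (n + r) * ((n + r).descFactorial r) = μ ^ r * poissonP μ n := by
  induction r with
  | zero => norm_num
  | succ r ih =>
    have h1 : (n + r + 1).descFactorial (r + 1) = (n + r + 1) * (n + r).descFactorial r :=
      Nat.succ_descFactorial_succ (n + r) r
    rw [show n + (r + 1) = n + r + 1 from rfl, h1]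
    push_cast
    rw [show poissonP μ (n + r + 1) * (((n : ℝ) + (r : ℝ) + 1) * ((n + r).descFactorial r)) =
      (poissonP μ ((n + r) + 1) * (((n + r : ℕ) : ℝ) + 1)) * ((n + r).descFactorial r) by
        push_cast; ring,
      poissonP_succ_mul, mul_assoc, ih]
    ring

/-- Stirling numbers of the second kind. -/
def St : ℕ → ℕ → ℕ
  | 0, 0 => 1
  | 0, _ + 1 => 0
  | _ + 1, 0 => 0
  | a + 1, r + 1 => St a r + (r + 1) * St a (r + 1)

lemma St_eq_zero : ∀ {a r : ℕ}, a < r → St a r = 0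
  | 0, r + 1, _ => rfl
  | a + 1, r + 1, h => by
      rw [St, St_eq_zero (by omega), St_eq_zero (by omega)]
      simp
  | a + 1, 0, h => by omega

lemma desc_step (n r : ℕ) :
    n * n.descFactorial r = n.descFactorial (r + 1) + r * n.descFactorial r := by
  rcases lt_or_ge n r with hl | hg
  · rw [Nat.descFactorial_eq_zero_iff_lt.2 hl, Nat.descFactorial_eq_zero_iff_lt.2 (by omega)]
    simp
  · rw [Nat.descFactorial_succ]
    nlinarith [Nat.sub_add_cancel hg]

lemma pow_eq_sum_St (n a : ℕ) :
    n ^ a = ∑ r ∈ Finset.range (a + 1), St a r * n.descFactorial r := by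
  induction a with
  | zero => simp [St]
  | succ a ih =>
    rw [pow_succ, ih, Finset.sum_mul]
    have key : ∀ r, (St a r * n.descFactorial r) * n
        = St a r * n.descFactorial (r + 1) + (r * St a r) * n.descFactorial r := by
      intro r
      rw [mul_comm _ n, ← mul_assoc, mul_comm n _, mul_assoc, desc_step n r]
      ring
    rw [Finset.sum_congr rfl (fun r _ => key r), Finset.sum_add_distrib]
    -- RHS: sum over range (a+2); strip the r = 0 term (St (a+1) 0 = 0)
    rw [Finset.sum_range_succ' (fun r => St (a + 1) r * n.descFactorial r) (a + 1)]
    have h0 : St (a + 1) 0 * n.descFactorial 0 = 0 := by simp [St]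
    rw [h0, add_zero]
    have hrec : ∀ r, St (a + 1) (r + 1) * n.descFactorial (r + 1)
        = St a r * n.descFactorial (r + 1) + ((r + 1) * St a (r + 1)) * n.descFactorial (r + 1) := by
      intro r; rw [St]; ring
    rw [Finset.sum_congr rfl (fun r _ => hrec r), Finset.sum_add_distrib]
    congr 1
    -- ∑_{r < a+1} r * St a r * desc r = ∑_{r < a+1} (r+1) St a (r+1) desc (r+1)
    rw [Finset.sum_range_succ' (fun r => (r * St a r) * n.descFactorial r) a]
    simp only [Nat.zero_mul, Nat.mul_zero, zero_mul, add_zero]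
    rw [Finset.sum_range_succ (fun r => ((r + 1) * St a (r + 1)) * n.descFactorial (r + 1)) a]
    rw [St_eq_zero (by omega)]
    simp

lemma factorial_St_le (a r : ℕ) (hr : r ≤ a) : r.factorial * St a r ≤ r ^ a := by
  have := pow_eq_sum_St r a
  have hmem : r ∈ Finset.range (a + 1) := Finset.mem_range.2 (by omega)
  calc r.factorial * St a r = St a r * r.descFactorial r := by
        rw [Nat.descFactorial_self]; ring
    _ ≤ ∑ s ∈ Finset.range (a + 1), St a s * r.descFactorial s :=
        Finset.single_le_sum (f := fun s => St a s * r.descFactorial s) (fun s _ => Nat.zero_le _) hmem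
    _ = r ^ a := (pow_eq_sum_St r a).symm

lemma St_zero_of_pos {a : ℕ} (ha : 1 ≤ a) : St a 0 = 0 := by
  obtain ⟨b, rfl⟩ : ∃ b, a = b + 1 := ⟨a - 1, by omega⟩
  rfl


lemma Lset_finite (m k : ℕ) (c : Fin k → ℕ) : (Lset m k c).Finite := by
  have hsub : Lset m k c ⊆ Set.pi Set.univ (fun _ : Fin m => Set.Iic (∑ j : Fin k, (j.val + 1) * c j)) := by
    rintro v ⟨x, hx, hv⟩ i -
    rw [hv i]
    exact Finset.sum_le_sum fun j _ => Nat.mul_le_mul_left _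
      (hx j ▸ Finset.single_le_sum (f := fun i => x i j) (fun _ _ => Nat.zero_le _) (Finset.mem_univ i))
  exact Set.Finite.subset (Set.Finite.pi (fun _ => Set.finite_Iic _)) hsub

instance Lset_finite' (m k : ℕ) (c : Fin k → ℕ) : Finite (Lset m k c) :=
  (Lset_finite m k c).to_subtype

lemma Lset_card_le (m k : ℕ) (c : Fin k → ℕ) :
    Nat.card (Lset m k c) ≤ ∏ j : Fin k, (c j + 1) ^ m := by
  classical
  -- inject into Fin m → Π j, Fin (c j + 1)
  have : ∃ F : Lset m k c → (Fin m → ∀ j : Fin k, Fin (c j + 1)),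
      Function.Injective F := by
    have hx : ∀ v : Lset m k c, ∃ x : Fin m → Fin k → ℕ,
        (∀ j, ∑ i, x i j = c j) ∧ ∀ i, (v : Fin m → ℕ) i = ∑ j, (j.val + 1) * x i j :=
      fun v => v.2
    choose x hx1 hx2 using hx
    have hle : ∀ v i j, x v i j ≤ c j := fun v i j =>
      (hx1 v j) ▸ Finset.single_le_sum (f := fun i => x v i j) (fun _ _ => Nat.zero_le _)
        (Finset.mem_univ i)
    refine ⟨fun v i j => ⟨x v i j, Nat.lt_succ_of_le (hle v i j)⟩, ?_⟩
    intro v w hvw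
    have hx_eq : x v = x w := by
      funext i j
      exact congrArg Fin.val (congrFun (congrFun hvw i) j)
    apply Subtype.ext
    funext i
    rw [hx2 v i, hx2 w i, hx_eq]
  obtain ⟨F, hF⟩ := this
  calc Nat.card (Lset m k c) ≤ Nat.card (Fin m → ∀ j : Fin k, Fin (c j + 1)) :=
        Nat.card_le_card_of_injective F hF
    _ = ∏ j : Fin k, (c j + 1) ^ m := by
        rw [Nat.card_pi]
        simp [Nat.card_pi, ← Finset.prod_pow]


lemma Lset_card_shift1 (m k : ℕ) (c : Fin k → ℕ) (j : Fin k) :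
    Nat.card (Lset m k (Function.update c j (c j + 1))) ≤ m * Nat.card (Lset m k c) := by
  classical
  have := Lset_finite' m k c
  set c' := Function.update c j (c j + 1) with hc'
  have key : ∀ (i₀ : Fin m) (v : Fin m → ℕ), v ∈ Lset m k c →
      Function.update v i₀ (v i₀ + (j.val + 1)) ∈ Lset m k c' := by
    rintro i₀ v ⟨x, hx, hv⟩
    refine ⟨fun i j' => if i = i₀ ∧ j' = j then x i j' + 1 else x i j', fun j' => ?_, fun i => ?_⟩
    · by_cases hj' : j' = j
      · subst hj'
        simp only [and_true]
        have hsplit : ∀ i : Fin m, (if i = i₀ then x i j' + 1 else x i j')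
            = x i j' + (if i = i₀ then 1 else 0) := by intro i; split <;> simp
        rw [Finset.sum_congr rfl fun i _ => hsplit i, Finset.sum_add_distrib, hx j',
          Finset.sum_ite_eq' Finset.univ i₀ (fun _ => 1)]
        simp [hc']
      · simp only [hj', and_false, if_false, hx j', hc', Function.update_of_ne hj']
    · by_cases hi : i = i₀
      · subst hi
        rw [Function.update_self, hv i]
        simp only [true_and]
        have hsplit : ∀ j1 : Fin k, (j1.val + 1) * (if j1 = j then x i j1 + 1 else x i j1)
            = (j1.val + 1) * x i j1 + (if j1 = j then j1.val + 1 else 0) := by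
          intro j1; split <;> ring
        rw [Finset.sum_congr rfl fun j1 _ => hsplit j1, Finset.sum_add_distrib,
          Finset.sum_ite_eq' Finset.univ j (fun j1 => j1.val + 1)]
        simp
      · rw [Function.update_of_ne hi, hv i]
        refine Finset.sum_congr rfl fun j' _ => ?_
        simp [hi]
  -- the surjection
  let G : Fin m × Lset m k c → Lset m k c' :=
    fun p => ⟨Function.update (p.2 : Fin m → ℕ) p.1 ((p.2 : Fin m → ℕ) p.1 + (j.val + 1)),
      key p.1 _ p.2.2⟩
  have hG : Function.Surjective G := by
    rintro ⟨w, x, hx, hw⟩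
    -- column j of x sums to c j + 1 > 0, so some entry is positive
    have hcol : ∑ i, x i j = c j + 1 := by rw [hx j, hc', Function.update_self]
    have hex : ∃ i₀ : Fin m, 1 ≤ x i₀ j := by
      by_contra hcon
      push_neg at hcon
      have : ∑ i, x i j = 0 := Finset.sum_eq_zero fun i _ => by
        have := hcon i; omega
      omega
    obtain ⟨i₀, hi₀⟩ := hex
    -- decremented matrix and vector
    refine ⟨⟨i₀, ⟨Function.update w i₀ (w i₀ - (j.val + 1)),
      ⟨fun i j' => if i = i₀ ∧ j' = j then x i j' - 1 else x i j', fun j' => ?_, fun i => ?_⟩⟩⟩, ?_⟩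
    · by_cases hj' : j' = j
      · subst hj'
        simp only [and_true]
        have hsplit : ∀ i : Fin m, (if i = i₀ then x i j' - 1 else x i j')
            = x i j' - (if i = i₀ then 1 else 0) := by intro i; split <;> simp
        rw [Finset.sum_congr rfl fun i _ => hsplit i]
        rw [Finset.sum_tsub_distrib _ (by intro i _; split <;> simp_all)]
        rw [hcol, Finset.sum_ite_eq' Finset.univ i₀ (fun _ => 1)]
        simp
      · simp only [hj', and_false, if_false, hx j', hc', Function.update_of_ne hj']
    · have hxi : ∀ i, w i = ∑ j', (j'.val + 1) * x i j' := hw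
      by_cases hi : i = i₀
      · subst hi
        rw [Function.update_self, hxi i]
        simp only [true_and]
        have hsplit : ∀ j1 : Fin k, (j1.val + 1) * (if j1 = j then x i j1 - 1 else x i j1)
            = (j1.val + 1) * x i j1 - (if j1 = j then j1.val + 1 else 0) := by
          intro j1
          split
          · rename_i hj1; subst hj1; rw [Nat.mul_sub]; simp
          · simp
        rw [Finset.sum_congr rfl fun j1 _ => hsplit j1]
        rw [Finset.sum_tsub_distrib _ (by
          intro j1 _
          split
          · rename_i hj1; subst hj1
            calc j1.val + 1 = (j1.val + 1) * 1 := by ring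
              _ ≤ (j1.val + 1) * x i j1 := Nat.mul_le_mul_left _ hi₀
          · omega)]
        rw [Finset.sum_ite_eq' Finset.univ j (fun j1 => j1.val + 1)]
        simp
      · rw [Function.update_of_ne hi, hxi i]
        refine Finset.sum_congr rfl fun j' _ => ?_
        simp [hi]
    · apply Subtype.ext
      simp only [G]
      funext i
      by_cases hi : i = i₀
      · subst hi
        rw [Function.update_self, Function.update_self]
        -- w i ≥ j+1 since x i j ≥ 1
        have : (j.val + 1) ≤ w i := by
          rw [hw i]
          calc j.val + 1 = (j.val + 1) * 1 := by ring
            _ ≤ (j.val + 1) * x i j := Nat.mul_le_mul_left _ hi₀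
            _ ≤ ∑ j', (j'.val + 1) * x i j' :=
              Finset.single_le_sum (f := fun j' => (j'.val + 1) * x i j') (fun _ _ => Nat.zero_le _)
                (Finset.mem_univ j)
        omega
      · rw [Function.update_of_ne hi, Function.update_of_ne hi]
  calc Nat.card (Lset m k c') ≤ Nat.card (Fin m × Lset m k c) :=
        Nat.card_le_card_of_surjective G hG
    _ = m * Nat.card (Lset m k c) := by rw [Nat.card_prod, Nat.card_eq_fintype_card, Fintype.card_fin]

-- iterated shift
lemma Lset_card_shiftr (m k : ℕ) (c : Fin k → ℕ) (j : Fin k) (r : ℕ) :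
    Nat.card (Lset m k (Function.update c j (c j + r))) ≤ m ^ r * Nat.card (Lset m k c) := by
  induction r with
  | zero => simp
  | succ r ih =>
    have hupd : Function.update c j (c j + (r + 1))
        = Function.update (Function.update c j (c j + r)) j
            ((Function.update c j (c j + r)) j + 1) := by
      funext t
      by_cases ht : t = j
      · subst ht; simp; omega
      · simp [Function.update_of_ne ht]
    rw [hupd]
    calc Nat.card (Lset m k _) ≤ m * Nat.card (Lset m k (Function.update c j (c j + r))) :=
          Lset_card_shift1 m k _ j
      _ ≤ m * (m ^ r * Nat.card (Lset m k c)) := Nat.mul_le_mul_left m ih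
      _ = m ^ (r + 1) * Nat.card (Lset m k c) := by ring

section ENN

variable (k : ℕ)

noncomputable def pwE (j : Fin k) (n : ℕ) : ℝ≥0∞ :=
  ENNReal.ofReal (poissonP (1 / ((j : ℕ) + 1 : ℝ)) n)

noncomputable def WE (c : Fin k → ℕ) : ℝ≥0∞ := ∏ j : Fin k, pwE k j (c j)

lemma lam_nonneg (j : Fin k) : (0:ℝ) ≤ 1 / ((j : ℕ) + 1 : ℝ) := by positivity

-- scalar shift in ENNReal
lemma pwE_shift (j : Fin k) (n r : ℕ) :
    pwE k j (n + r) * ((n + r).descFactorial r : ℝ≥0∞)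
      = (ENNReal.ofReal (1 / ((j : ℕ) + 1 : ℝ))) ^ r * pwE k j n := by
  unfold pwE
  rw [← ENNReal.ofReal_natCast, ← ENNReal.ofReal_pow (lam_nonneg k j),
    ← ENNReal.ofReal_mul (poissonP_nonneg (lam_nonneg k j) _),
    ← ENNReal.ofReal_mul (by positivity), poissonP_shift]

lemma WE_shift (c : Fin k → ℕ) (j : Fin k) (r : ℕ) :
    WE k (Function.update c j (c j + r)) * (((c j + r).descFactorial r : ℕ) : ℝ≥0∞)
      = (ENNReal.ofReal (1 / ((j : ℕ) + 1 : ℝ))) ^ r * WE k c := by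
  classical
  unfold WE
  have h1 : (fun t => pwE k t (Function.update c j (c j + r) t))
      = Function.update (fun t => pwE k t (c t)) j (pwE k j (c j + r)) := by
    funext t
    by_cases ht : t = j
    · subst ht; simp
    · simp [Function.update_of_ne ht]
  rw [h1]
  rw [← Finset.mul_prod_erase _ _ (Finset.mem_univ j)]
  rw [← Finset.mul_prod_erase _ (fun t => pwE k t (c t)) (Finset.mem_univ j)]
  have h2 : ∏ t ∈ Finset.univ.erase j,
      Function.update (fun t => pwE k t (c t)) j (pwE k j (c j + r)) t
      = ∏ t ∈ Finset.univ.erase j, pwE k t (c t) :=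
    Finset.prod_congr rfl (fun t ht => by
      rw [Function.update_of_ne (Finset.ne_of_mem_erase ht)])
  rw [Function.update_self, h2, mul_right_comm, pwE_shift]
  ring



-- the tsum shift identity (†)
lemma tsum_shift (j : Fin k) (r : ℕ) (F : (Fin k → ℕ) → ℝ≥0∞) :
    ∑' c : Fin k → ℕ, (WE k c * (((c j).descFactorial r : ℕ) : ℝ≥0∞)) * F c
      = (ENNReal.ofReal (1 / ((j : ℕ) + 1 : ℝ))) ^ r
        * ∑' c : Fin k → ℕ, WE k c * F (Function.update c j (c j + r)) := by
  classical
  set φ : (Fin k → ℕ) → (Fin k → ℕ) := fun c => Function.update c j (c j + r) with hφ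
  have hinj : Function.Injective φ := by
    intro c₁ c₂ hcc
    funext t
    by_cases ht : t = j
    · subst ht
      have := congrFun hcc t
      simp only [φ, Function.update_self] at this
      omega
    · have := congrFun hcc t
      simpa [φ, Function.update_of_ne ht] using this
  set g : (Fin k → ℕ) → ℝ≥0∞ := fun c => (WE k c * (((c j).descFactorial r : ℕ) : ℝ≥0∞)) * F c
    with hg
  have hsupp : Function.support g ⊆ Set.range φ := by
    intro c hc
    have hr : r ≤ c j := by
      by_contra hcon
      apply hc
      simp only [hg, Nat.descFactorial_eq_zero_iff_lt.2 (by omega : c j < r)]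
      simp
    refine ⟨Function.update c j (c j - r), ?_⟩
    funext t
    by_cases ht : t = j
    · subst ht; simp [φ]; omega
    · simp [φ, Function.update_of_ne ht]
  have heq := hinj.tsum_eq hsupp
  rw [← heq]
  have hterm : ∀ c, g (φ c) = (ENNReal.ofReal (1 / ((j : ℕ) + 1 : ℝ))) ^ r
      * (WE k c * F (φ c)) := by
    intro c
    have hφj : φ c j = c j + r := by simp [φ]
    simp only [hg, hφj]
    rw [WE_shift k c j r, mul_assoc]
  rw [tsum_congr hterm, ENNReal.tsum_mul_left]

-- the main induction over a finite set of coordinates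
lemma moment_ind (m : ℕ) (h : ℕ) (j : Fin h → Fin k) (hj : Function.Injective j)
    (r : Fin h → ℕ) (s : Finset (Fin h)) :
    ∑' c : Fin k → ℕ,
        (WE k c * ∏ i ∈ s, (((c (j i)).descFactorial (r i) : ℕ) : ℝ≥0∞))
          * (Nat.card (Lset m k c) : ℝ≥0∞)
      ≤ (∏ i ∈ s, (ENNReal.ofReal (1 / ((j i : ℕ) + 1 : ℝ)) * (m : ℝ≥0∞)) ^ r i)
        * ∑' c : Fin k → ℕ, WE k c * (Nat.card (Lset m k c) : ℝ≥0∞) := by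
  classical
  induction s using Finset.induction with
  | empty => simp
  | @insert i₀ s hi₀s ih =>
    set N : (Fin k → ℕ) → ℝ≥0∞ := fun c => (Nat.card (Lset m k c) : ℝ≥0∞) with hN
    set lE : Fin h → ℝ≥0∞ := fun i => ENNReal.ofReal (1 / ((j i : ℕ) + 1 : ℝ)) with hlE
    have step1 : ∀ c : Fin k → ℕ,
        (WE k c * ∏ i ∈ insert i₀ s, (((c (j i)).descFactorial (r i) : ℕ) : ℝ≥0∞)) * N c
        = (WE k c * (((c (j i₀)).descFactorial (r i₀) : ℕ) : ℝ≥0∞))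
          * ((∏ i ∈ s, (((c (j i)).descFactorial (r i) : ℕ) : ℝ≥0∞)) * N c) := by
      intro c
      rw [Finset.prod_insert hi₀s]
      ring
    rw [tsum_congr step1, tsum_shift k (j i₀) (r i₀)]
    have step2 : ∑' c : Fin k → ℕ, WE k c
        * ((∏ i ∈ s, ((((Function.update c (j i₀) (c (j i₀) + r i₀)) (j i)).descFactorial (r i) : ℕ) : ℝ≥0∞))
            * N (Function.update c (j i₀) (c (j i₀) + r i₀)))
        ≤ (m : ℝ≥0∞) ^ r i₀ * ∑' c : Fin k → ℕ,
            (WE k c * ∏ i ∈ s, (((c (j i)).descFactorial (r i) : ℕ) : ℝ≥0∞)) * N c := by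
      rw [← ENNReal.tsum_mul_left]
      refine ENNReal.tsum_le_tsum fun c => ?_
      have hprod : (∏ i ∈ s, ((((Function.update c (j i₀) (c (j i₀) + r i₀)) (j i)).descFactorial (r i) : ℕ) : ℝ≥0∞))
          = ∏ i ∈ s, (((c (j i)).descFactorial (r i) : ℕ) : ℝ≥0∞) := by
        refine Finset.prod_congr rfl fun i hi => ?_
        have : j i ≠ j i₀ := fun hcc => hi₀s (hj hcc ▸ hi)
        rw [Function.update_of_ne this]
      have hcard : N (Function.update c (j i₀) (c (j i₀) + r i₀)) ≤ (m : ℝ≥0∞) ^ r i₀ * N c := by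
        simp only [hN]
        rw [← ENNReal.coe_natCast, ← ENNReal.coe_natCast (Nat.card (Lset m k c)),
          ← ENNReal.coe_natCast m]
        rw [← ENNReal.coe_pow, ← ENNReal.coe_mul, ENNReal.coe_le_coe]
        have := Lset_card_shiftr m k c (j i₀) (r i₀)
        exact_mod_cast this
      rw [hprod]
      calc WE k c * ((∏ i ∈ s, (((c (j i)).descFactorial (r i) : ℕ) : ℝ≥0∞))
            * N (Function.update c (j i₀) (c (j i₀) + r i₀)))
          ≤ WE k c * ((∏ i ∈ s, (((c (j i)).descFactorial (r i) : ℕ) : ℝ≥0∞))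
            * ((m : ℝ≥0∞) ^ r i₀ * N c)) := by
            exact mul_le_mul_right (mul_le_mul_right hcard _) _
        _ = (m : ℝ≥0∞) ^ r i₀ * ((WE k c * ∏ i ∈ s, (((c (j i)).descFactorial (r i) : ℕ) : ℝ≥0∞)) * N c) := by
            ring
    calc lE i₀ ^ r i₀ * ∑' c : Fin k → ℕ, WE k c
          * ((∏ i ∈ s, ((((Function.update c (j i₀) (c (j i₀) + r i₀)) (j i)).descFactorial (r i) : ℕ) : ℝ≥0∞))
            * N (Function.update c (j i₀) (c (j i₀) + r i₀)))
        ≤ lE i₀ ^ r i₀ * ((m : ℝ≥0∞) ^ r i₀ * ∑' c : Fin k → ℕ,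
            (WE k c * ∏ i ∈ s, (((c (j i)).descFactorial (r i) : ℕ) : ℝ≥0∞)) * N c) :=
          mul_le_mul_right step2 _
      _ ≤ lE i₀ ^ r i₀ * ((m : ℝ≥0∞) ^ r i₀
            * ((∏ i ∈ s, (lE i * (m : ℝ≥0∞)) ^ r i) * ∑' c : Fin k → ℕ, WE k c * N c)) := by
          exact mul_le_mul_right (mul_le_mul_right ih _) _
      _ = (∏ i ∈ insert i₀ s, (lE i * (m : ℝ≥0∞)) ^ r i) * ∑' c : Fin k → ℕ, WE k c * N c := by
          rw [Finset.prod_insert hi₀s, mul_pow]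
          ring


lemma tsum_pi_prod : ∀ (K : ℕ) (g : Fin K → ℕ → ℝ≥0∞),
    ∑' c : Fin K → ℕ, ∏ t : Fin K, g t (c t) = ∏ t : Fin K, ∑' n : ℕ, g t n := by
  intro K
  induction K with
  | zero =>
    intro g
    rw [tsum_eq_single (fun i => i.elim0) (by intro b hb; exfalso; exact hb (funext fun i => i.elim0))]
    simp
  | succ K ih =>
    intro g
    set e := (Fin.consEquiv (fun _ : Fin (K + 1) => ℕ)) with he
    rw [← e.tsum_eq]
    have : ∀ p : ℕ × (Fin K → ℕ), ∏ t : Fin (K + 1), g t (e p t)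
        = g 0 p.1 * ∏ t : Fin K, g t.succ (p.2 t) := by
      intro p
      rw [Fin.prod_univ_succ]
      simp [he, Fin.consEquiv]
    calc ∑' p : ℕ × (Fin K → ℕ), ∏ t : Fin (K + 1), g t (e p t)
        = ∑' p : ℕ × (Fin K → ℕ), g 0 p.1 * ∏ t : Fin K, g t.succ (p.2 t) := tsum_congr this
      _ = ∑' n : ℕ, ∑' d : Fin K → ℕ, g 0 n * ∏ t : Fin K, g t.succ (d t) :=
          ENNReal.tsum_prod (f := fun (n : ℕ) (d : Fin K → ℕ) => g 0 n * ∏ t : Fin K, g t.succ (d t))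
      _ = (∑' n : ℕ, g 0 n) * ∑' d : Fin K → ℕ, ∏ t : Fin K, g t.succ (d t) := by
          rw [← ENNReal.tsum_mul_right]
          exact tsum_congr fun n => ENNReal.tsum_mul_left
      _ = ∏ t : Fin (K + 1), ∑' n : ℕ, g t n := by
          rw [ih (fun t => g t.succ), Fin.prod_univ_succ]

lemma col_finite (j : Fin k) (m : ℕ) :
    ∑' n : ℕ, pwE k j n * (((n + 1) ^ m : ℕ) : ℝ≥0∞) < ⊤ := by
  set lam : ℝ := 1 / ((j : ℕ) + 1 : ℝ) with hlam
  have hlam0 : 0 ≤ lam := lam_nonneg k j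
  have hbound : ∀ n : ℕ, pwE k j n * (((n + 1) ^ m : ℕ) : ℝ≥0∞)
      ≤ ENNReal.ofReal ((Real.exp (-lam) * 2 ^ m) * (lam * 2 ^ m) ^ n / n.factorial) := by
    intro n
    rw [pwE, ← ENNReal.ofReal_natCast, ← ENNReal.ofReal_mul (poissonP_nonneg hlam0 n)]
    apply ENNReal.ofReal_le_ofReal
    have hpow : ((n + 1) ^ m : ℕ) ≤ ((2 ^ m * (2 ^ m) ^ n : ℕ)) := by
      have h1 : (n + 1) ≤ 2 ^ (n + 1) := (Nat.lt_two_pow_self (n := n + 1)).le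
      calc (n + 1) ^ m ≤ (2 ^ (n + 1)) ^ m := Nat.pow_le_pow_left h1 m
        _ = 2 ^ m * (2 ^ m) ^ n := by rw [← pow_mul, ← pow_mul, ← pow_add]; ring_nf
    calc poissonP lam n * ((n + 1) ^ m : ℕ)
        ≤ poissonP lam n * ((2 ^ m * (2 ^ m) ^ n : ℕ)) := by
          apply mul_le_mul_of_nonneg_left _ (poissonP_nonneg hlam0 n)
          exact_mod_cast hpow
      _ = (Real.exp (-lam) * 2 ^ m) * (lam * 2 ^ m) ^ n / n.factorial := by
          rw [poissonP]
          push_cast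
          rw [mul_pow]
          field_simp
  calc ∑' n : ℕ, pwE k j n * (((n + 1) ^ m : ℕ) : ℝ≥0∞)
      ≤ ∑' n : ℕ, ENNReal.ofReal ((Real.exp (-lam) * 2 ^ m) * (lam * 2 ^ m) ^ n / n.factorial) :=
        ENNReal.tsum_le_tsum hbound
    _ = ENNReal.ofReal (∑' n : ℕ, (Real.exp (-lam) * 2 ^ m) * ((lam * 2 ^ m) ^ n / n.factorial)) := by
        rw [ENNReal.ofReal_tsum_of_nonneg (fun n => by positivity)
          (((Real.summable_pow_div_factorial (lam * 2 ^ m)).mul_left _))]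
        exact tsum_congr fun n => by rw [mul_div_assoc]
    _ < ⊤ := ENNReal.ofReal_lt_top

lemma EN_finite (m : ℕ) :
    ∑' c : Fin k → ℕ, WE k c * (Nat.card (Lset m k c) : ℝ≥0∞) < ⊤ := by
  have hb : ∀ c : Fin k → ℕ, WE k c * (Nat.card (Lset m k c) : ℝ≥0∞)
      ≤ ∏ t : Fin k, (pwE k t (c t) * (((c t + 1) ^ m : ℕ) : ℝ≥0∞)) := by
    intro c
    rw [Finset.prod_mul_distrib]
    unfold WE
    refine mul_le_mul_right ?_ _
    rw [← Nat.cast_prod]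
    exact_mod_cast Nat.cast_le.2 (Lset_card_le m k c)
  calc ∑' c : Fin k → ℕ, WE k c * (Nat.card (Lset m k c) : ℝ≥0∞)
      ≤ ∑' c : Fin k → ℕ, ∏ t : Fin k, (pwE k t (c t) * (((c t + 1) ^ m : ℕ) : ℝ≥0∞)) :=
        ENNReal.tsum_le_tsum hb
    _ = ∏ t : Fin k, ∑' n : ℕ, (pwE k t n * (((n + 1) ^ m : ℕ) : ℝ≥0∞)) :=
        tsum_pi_prod k (fun t n => pwE k t n * (((n + 1) ^ m : ℕ) : ℝ≥0∞))
    _ < ⊤ := ENNReal.prod_lt_top (fun t _ => col_finite k t m)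

end ENN

lemma real_col (a M jv : ℕ) (ha : 1 ≤ a) :
    ∑ r ∈ Finset.range (a + 1), (St a r : ℝ) * ((1 / ((jv : ℝ) + 1)) * M) ^ r
      ≤ (1 / ((jv : ℝ) + 1)) * Real.exp (M * 2 ^ a) := by
  set lam : ℝ := 1 / ((jv : ℝ) + 1) with hlam
  have hlam0 : 0 < lam := by positivity
  have hlam1 : lam ≤ 1 := by
    rw [hlam]
    rw [div_le_one (by positivity)]
    simp
  have hterm : ∀ r ∈ Finset.range (a + 1),
      (St a r : ℝ) * (lam * M) ^ r ≤ lam * ((2 ^ a * M) ^ r / r.factorial) := by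
    intro r hr
    rcases Nat.eq_zero_or_pos r with hr0 | hr1
    · subst hr0
      simp [St_zero_of_pos ha]
      positivity
    · have hfact : (0:ℝ) < r.factorial := by positivity
      have h1 : (St a r : ℝ) * r.factorial ≤ (2 ^ a : ℝ) ^ r := by
        have hnat : r.factorial * St a r ≤ (2 ^ a) ^ r := by
          calc r.factorial * St a r ≤ r ^ a := factorial_St_le a r (by
                have := Finset.mem_range.1 hr; omega)
            _ ≤ (2 ^ r) ^ a := Nat.pow_le_pow_left (Nat.lt_two_pow_self (n := r)).le a
            _ = (2 ^ a) ^ r := by rw [← pow_mul, ← pow_mul, Nat.mul_comm]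
        calc (St a r : ℝ) * r.factorial = ((r.factorial * St a r : ℕ) : ℝ) := by
              push_cast; ring
          _ ≤ (((2 ^ a) ^ r : ℕ) : ℝ) := by exact_mod_cast hnat
          _ = (2 ^ a : ℝ) ^ r := by push_cast; ring
      have h2 : lam ^ r ≤ lam := pow_le_of_le_one hlam0.le hlam1 (by omega)
      have h3 : (St a r : ℝ) ≤ (2 ^ a : ℝ) ^ r / r.factorial := by
        rw [le_div_iff₀ hfact]; exact h1
      calc (St a r : ℝ) * (lam * M) ^ r = (St a r : ℝ) * (lam ^ r * (M : ℝ) ^ r) := by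
            rw [mul_pow]
        _ ≤ ((2 ^ a : ℝ) ^ r / r.factorial) * (lam * (M : ℝ) ^ r) := by
            apply mul_le_mul h3 (by
              apply mul_le_mul_of_nonneg_right h2 (by positivity)) (by positivity) (by positivity)
        _ = lam * ((2 ^ a * M) ^ r / r.factorial) := by
            rw [mul_pow]; field_simp
  calc ∑ r ∈ Finset.range (a + 1), (St a r : ℝ) * (lam * M) ^ r
      ≤ ∑ r ∈ Finset.range (a + 1), lam * ((2 ^ a * M) ^ r / r.factorial) :=
        Finset.sum_le_sum hterm
    _ = lam * ∑ r ∈ Finset.range (a + 1), ((2 ^ a * (M:ℝ)) ^ r / r.factorial) := by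
        rw [Finset.mul_sum]
    _ ≤ lam * Real.exp (2 ^ a * M) := by
        apply mul_le_mul_of_nonneg_left _ hlam0.le
        exact Real.sum_le_exp_of_nonneg (by positivity) (a + 1)
    _ = lam * Real.exp (M * 2 ^ a) := by rw [mul_comm ((2:ℝ) ^ a) (M:ℝ)]

lemma col_E (a M : ℕ) (ha : 1 ≤ a) (j : Fin k) :
    ∑ r ∈ Finset.range (a + 1),
        (St a r : ℝ≥0∞) * (ENNReal.ofReal (1 / ((j : ℕ) + 1 : ℝ)) * (M : ℝ≥0∞)) ^ r
      ≤ ENNReal.ofReal ((1 / ((j : ℕ) + 1 : ℝ)) * Real.exp (M * 2 ^ a)) := by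
  set lam : ℝ := 1 / ((j : ℕ) + 1 : ℝ) with hlam
  have hlam0 : (0:ℝ) ≤ lam := lam_nonneg k j
  have hconv : ∀ r, (St a r : ℝ≥0∞) * (ENNReal.ofReal lam * (M : ℝ≥0∞)) ^ r
      = ENNReal.ofReal ((St a r : ℝ) * (lam * M) ^ r) := by
    intro r
    rw [← ENNReal.ofReal_natCast M, ← ENNReal.ofReal_natCast (St a r),
      ← ENNReal.ofReal_mul hlam0, ← ENNReal.ofReal_pow (by positivity),
      ← ENNReal.ofReal_mul (by positivity)]
  calc ∑ r ∈ Finset.range (a + 1),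
        (St a r : ℝ≥0∞) * (ENNReal.ofReal lam * (M : ℝ≥0∞)) ^ r
      = ∑ r ∈ Finset.range (a + 1), ENNReal.ofReal ((St a r : ℝ) * (lam * M) ^ r) :=
        Finset.sum_congr rfl fun r _ => hconv r
    _ = ENNReal.ofReal (∑ r ∈ Finset.range (a + 1), (St a r : ℝ) * (lam * M) ^ r) :=
        (ENNReal.ofReal_sum_of_nonneg (fun r _ => by positivity)).symm
    _ ≤ ENNReal.ofReal (lam * Real.exp (M * 2 ^ a)) :=
        ENNReal.ofReal_le_ofReal (real_col a M j ha)

lemma tsum_real_eq {ι : Type*} (F : ι → ℝ) (hF : ∀ x, 0 ≤ F x) :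
    ∑' x, F x = (∑' x, ENNReal.ofReal (F x)).toReal := by
  by_cases hs : Summable F
  · rw [← ENNReal.ofReal_tsum_of_nonneg hF hs, ENNReal.toReal_ofReal (tsum_nonneg hF)]
  · rw [tsum_eq_zero_of_not_summable hs]
    have htop : ∑' x, ENNReal.ofReal (F x) = ⊤ := by
      by_contra hne
      apply hs
      have h1 : ∀ x, ENNReal.ofReal (F x) = ((Real.toNNReal (F x) : ℝ≥0) : ℝ≥0∞) :=
        fun x => rfl
      rw [tsum_congr h1] at hne
      have h2 : Summable (fun x => Real.toNNReal (F x)) :=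
        ENNReal.tsum_coe_ne_top_iff_summable.1 hne
      have h3 : Summable (fun x => ((Real.toNNReal (F x) : ℝ≥0) : ℝ)) :=
        NNReal.summable_coe.2 h2
      refine h3.congr fun x => ?_
      rw [Real.coe_toNNReal _ (hF x)]
    rw [htop]
    simp

lemma main_E (m h : ℕ) (j : Fin h → Fin k) (hj : Function.Injective j)
    (a : Fin h → ℕ) (ha : ∀ i, 1 ≤ a i) :
    ∑' c : Fin k → ℕ, WE k c
        * ((Nat.card (Lset m k c) : ℝ≥0∞) * ∏ i, ((c (j i) : ℕ) : ℝ≥0∞) ^ a i)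
      ≤ (∏ i, ENNReal.ofReal ((1 / ((j i : ℕ) + 1 : ℝ)) * Real.exp ((m : ℝ) * 2 ^ a i)))
        * ∑' c : Fin k → ℕ, WE k c * (Nat.card (Lset m k c) : ℝ≥0∞) := by
  classical
  set N : (Fin k → ℕ) → ℝ≥0∞ := fun c => (Nat.card (Lset m k c) : ℝ≥0∞) with hN
  set lE : Fin h → ℝ≥0∞ := fun i => ENNReal.ofReal (1 / ((j i : ℕ) + 1 : ℝ)) with hlE
  set B : ℝ≥0∞ := ∑' c : Fin k → ℕ, WE k c * N c with hB
  have step_pow : ∀ (c : Fin k → ℕ) (i : Fin h), ((c (j i) : ℕ) : ℝ≥0∞) ^ a i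
      = ∑ r ∈ Finset.range (a i + 1),
          (St (a i) r : ℝ≥0∞) * (((c (j i)).descFactorial r : ℕ) : ℝ≥0∞) := by
    intro c i
    have := pow_eq_sum_St (c (j i)) (a i)
    calc ((c (j i) : ℕ) : ℝ≥0∞) ^ a i = (((c (j i)) ^ a i : ℕ) : ℝ≥0∞) := by push_cast; ring
      _ = ((∑ r ∈ Finset.range (a i + 1), St (a i) r * (c (j i)).descFactorial r : ℕ) : ℝ≥0∞) := by
          rw [← this]
      _ = _ := by push_cast; ring
  have expand : ∀ c : Fin k → ℕ, ∏ i, ((c (j i) : ℕ) : ℝ≥0∞) ^ a i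
      = ∑ rv ∈ Fintype.piFinset (fun i : Fin h => Finset.range (a i + 1)),
          ∏ i, ((St (a i) (rv i) : ℝ≥0∞) * (((c (j i)).descFactorial (rv i) : ℕ) : ℝ≥0∞)) := by
    intro c
    rw [Finset.prod_congr rfl (fun i _ => step_pow c i)]
    exact Finset.prod_univ_sum _ _
  calc ∑' c : Fin k → ℕ, WE k c * (N c * ∏ i, ((c (j i) : ℕ) : ℝ≥0∞) ^ a i)
      = ∑' c : Fin k → ℕ, ∑ rv ∈ Fintype.piFinset (fun i : Fin h => Finset.range (a i + 1)),
          (∏ i, (St (a i) (rv i) : ℝ≥0∞))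
            * ((WE k c * ∏ i, (((c (j i)).descFactorial (rv i) : ℕ) : ℝ≥0∞)) * N c) := by
        refine tsum_congr fun c => ?_
        rw [expand c, Finset.mul_sum, Finset.mul_sum]
        refine Finset.sum_congr rfl fun rv _ => ?_
        rw [Finset.prod_mul_distrib]
        ring
    _ = ∑ rv ∈ Fintype.piFinset (fun i : Fin h => Finset.range (a i + 1)),
          (∏ i, (St (a i) (rv i) : ℝ≥0∞))
            * ∑' c : Fin k → ℕ,
                (WE k c * ∏ i, (((c (j i)).descFactorial (rv i) : ℕ) : ℝ≥0∞)) * N c := by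
        rw [Summable.tsum_finsetSum (fun rv _ => ENNReal.summable)]
        exact Finset.sum_congr rfl fun rv _ => ENNReal.tsum_mul_left
    _ ≤ ∑ rv ∈ Fintype.piFinset (fun i : Fin h => Finset.range (a i + 1)),
          (∏ i, (St (a i) (rv i) : ℝ≥0∞)) * ((∏ i, (lE i * (m : ℝ≥0∞)) ^ rv i) * B) := by
        refine Finset.sum_le_sum fun rv _ => mul_le_mul_right ?_ _
        exact moment_ind k m h j hj rv Finset.univ
    _ = (∑ rv ∈ Fintype.piFinset (fun i : Fin h => Finset.range (a i + 1)),
          ∏ i, ((St (a i) (rv i) : ℝ≥0∞) * (lE i * (m : ℝ≥0∞)) ^ rv i)) * B := by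
        rw [Finset.sum_mul]
        refine Finset.sum_congr rfl fun rv _ => ?_
        rw [Finset.prod_mul_distrib]
        ring
    _ = (∏ i, ∑ r ∈ Finset.range (a i + 1),
          (St (a i) r : ℝ≥0∞) * (lE i * (m : ℝ≥0∞)) ^ r) * B := by
        rw [Finset.prod_univ_sum]
    _ ≤ (∏ i, ENNReal.ofReal ((1 / ((j i : ℕ) + 1 : ℝ)) * Real.exp ((m : ℝ) * 2 ^ a i))) * B := by
        refine mul_le_mul_left (Finset.prod_le_prod' fun i _ => ?_) _
        have := col_E (a i) m (ha i) (j i)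
        simpa [hlE] using this

theorem stmt_10 (m k h : ℕ) (hm : 1 ≤ m) (j : Fin h → Fin k) (hj : Function.Injective j)
    (a : Fin h → ℕ) (ha : ∀ i, 1 ≤ a i) :
    pexp k (fun c => (Nat.card (Lset m k c) : ℝ) * ∏ i, (c (j i) : ℝ) ^ a i) ≤
      (Real.exp ((m : ℝ) * ∑ i, (2 : ℝ) ^ a i) / ∏ i, (((j i : ℕ) + 1 : ℝ))) *
        pexp k (fun c => (Nat.card (Lset m k c) : ℝ)) := by
  classical
  set K : ℝ := Real.exp ((m : ℝ) * ∑ i, (2 : ℝ) ^ a i) / ∏ i, (((j i : ℕ) + 1 : ℝ)) with hK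
  have hprodpos : (0:ℝ) < ∏ i, (((j i : ℕ) + 1 : ℝ)) :=
    Finset.prod_pos fun i _ => by positivity
  have hK0 : 0 ≤ K := by rw [hK]; positivity
  have hw : ∀ c : Fin k → ℕ, 0 ≤ ∏ t : Fin k, poissonP (1 / ((t : ℕ) + 1 : ℝ)) (c t) :=
    fun c => Finset.prod_nonneg fun t _ => poissonP_nonneg (lam_nonneg k t) _
  have hWE : ∀ c : Fin k → ℕ,
      ENNReal.ofReal (∏ t : Fin k, poissonP (1 / ((t : ℕ) + 1 : ℝ)) (c t)) = WE k c := by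
    intro c
    rw [ENNReal.ofReal_prod_of_nonneg (fun t _ => poissonP_nonneg (lam_nonneg k t) _)]
    rfl
  set A : ℝ≥0∞ := ∑' c : Fin k → ℕ, WE k c
      * ((Nat.card (Lset m k c) : ℝ≥0∞) * ∏ i, ((c (j i) : ℕ) : ℝ≥0∞) ^ a i) with hA
  set B : ℝ≥0∞ := ∑' c : Fin k → ℕ, WE k c * (Nat.card (Lset m k c) : ℝ≥0∞) with hB
  have hAcal : pexp k (fun c => (Nat.card (Lset m k c) : ℝ) * ∏ i, (c (j i) : ℝ) ^ a i)
      = A.toReal := by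
    rw [pexp, tsum_real_eq _ (fun c => mul_nonneg (hw c)
      (mul_nonneg (Nat.cast_nonneg _) (Finset.prod_nonneg fun i _ => by positivity)))]
    congr 1
    refine tsum_congr fun c => ?_
    rw [ENNReal.ofReal_mul (hw c), hWE c,
      ENNReal.ofReal_mul (Nat.cast_nonneg _),
      ENNReal.ofReal_natCast,
      ENNReal.ofReal_prod_of_nonneg (fun i _ => by positivity)]
    congr 1
    congr 1
    refine Finset.prod_congr rfl fun i _ => ?_
    rw [ENNReal.ofReal_pow (Nat.cast_nonneg _), ENNReal.ofReal_natCast]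
  have hBcal : pexp k (fun c => (Nat.card (Lset m k c) : ℝ)) = B.toReal := by
    rw [pexp, tsum_real_eq _ (fun c => mul_nonneg (hw c) (Nat.cast_nonneg _))]
    congr 1
    refine tsum_congr fun c => ?_
    rw [ENNReal.ofReal_mul (hw c), hWE c, ENNReal.ofReal_natCast]
  have hmain : A ≤ ENNReal.ofReal K * B := by
    rw [hA, hB]
    refine le_trans (main_E m h j hj a ha) ?_
    refine mul_le_mul_left (le_of_eq ?_) _
    rw [← ENNReal.ofReal_prod_of_nonneg (fun i _ => by positivity)]
    congr 1
    rw [Finset.prod_mul_distrib, ← Real.exp_sum, hK]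
    rw [show ∑ i : Fin h, (m : ℝ) * 2 ^ a i = (m : ℝ) * ∑ i : Fin h, (2:ℝ) ^ a i from
      (Finset.mul_sum _ _ _).symm]
    rw [div_eq_mul_inv, mul_comm]
    congr 1
    rw [← Finset.prod_inv_distrib]
    exact Finset.prod_congr rfl fun i _ => one_div _
  have hBtop : B ≠ ⊤ := (EN_finite k m).ne
  have hRtop : ENNReal.ofReal K * B ≠ ⊤ := ENNReal.mul_ne_top ENNReal.ofReal_ne_top hBtop
  rw [hAcal, hBcal]
  calc A.toReal ≤ (ENNReal.ofReal K * B).toReal := ENNReal.toReal_mono hRtop hmain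
    _ = K * B.toReal := by rw [ENNReal.toReal_mul, ENNReal.toReal_ofReal hK0]
end

section
/- Let X be a Poisson random variable with mean 1/j for an integer j ≥ 1, and let a ≥ 1, m ≥ 1 be integers. Then E[X^a · m^X] ≤ e^{2^a m}/j. -/
lemma exp_tsum (x : ℝ) : Real.exp x = ∑' n : ℕ, x ^ n / n.factorial := by
  rw [Real.exp_eq_exp_ℝ, NormedSpace.exp_eq_tsum_div]

theorem stmt_11 (j a m : ℕ) (hj : 1 ≤ j) (ha : 1 ≤ a) (hm : 1 ≤ m) :
    (∑' r : ℕ, poissonP (1 / (j : ℝ)) r * ((r : ℝ) ^ a * (m : ℝ) ^ r)) ≤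
      Real.exp ((2 : ℝ) ^ a * m) / j := by
  have hj0 : (0:ℝ) < j := by exact_mod_cast hj
  have hm0 : (1:ℝ) ≤ m := by exact_mod_cast hm
  set μ : ℝ := 1 / (j : ℝ) with hμdef
  have hμ0 : 0 < μ := by positivity
  have hμ1 : μ ≤ 1 := by
    rw [hμdef, div_le_one hj0]; exact_mod_cast hj
  set c : ℝ := 2 ^ (a-1) * m with hcdef
  have hc0 : 0 < c := by positivity
  have hcm : (m:ℝ) ≤ c := by
    rw [hcdef]
    nlinarith [one_le_pow₀ (by norm_num : (1:ℝ) ≤ 2) (n := a-1)]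
  set L : ℕ → ℝ := fun r => poissonP μ r * ((r : ℝ) ^ a * (m : ℝ) ^ r) with hL
  have hLnn : ∀ r, 0 ≤ L r := by
    intro r
    have : 0 ≤ poissonP μ r := by unfold poissonP; positivity
    positivity
  -- crude bound for summability
  have hcrude : ∀ r : ℕ, L r ≤ Real.exp (-μ) * ((2^a * m * μ)^r / r.factorial) := by
    intro r
    have h1 : (r:ℝ)^a ≤ ((2:ℝ)^a)^r := by
      have : (r:ℕ) ^ a ≤ ((2:ℕ)^r) ^ a :=
        Nat.pow_le_pow_left (Nat.lt_two_pow_self (n := r)).le a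
      calc (r:ℝ)^a ≤ ((2:ℝ)^r)^a := by exact_mod_cast this
        _ = ((2:ℝ)^a)^r := by rw [← pow_mul, ← pow_mul, Nat.mul_comm]
    have hL' : L r = Real.exp (-μ) * ((μ^r * ((r:ℝ)^a * (m:ℝ)^r)) / r.factorial) := by
      simp only [hL, poissonP]; ring
    rw [hL']
    gcongr
    calc μ^r * ((r:ℝ)^a * (m:ℝ)^r) ≤ μ^r * (((2:ℝ)^a)^r * (m:ℝ)^r) := by gcongr
      _ = ((2:ℝ)^a * m * μ)^r := by rw [mul_pow, mul_pow]; ring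
  have hsumG : Summable (fun r : ℕ => Real.exp (-μ) * (((2:ℝ)^a * m * μ)^r / r.factorial)) :=
    (Real.summable_pow_div_factorial _).mul_left _
  have hsumL : Summable L := Summable.of_nonneg_of_le hLnn hcrude hsumG
  -- key termwise bound on shifted terms
  have key : ∀ s : ℕ, L (s+1) ≤ Real.exp (-μ) * μ * m * ((c*μ)^s / s.factorial) := by
    intro s
    have hfac : (((s+1).factorial :ℕ) : ℝ) = ((s:ℝ)+1) * s.factorial := by
      rw [Nat.factorial_succ]; push_cast; ring
    have hpow : ((s:ℝ)+1)^a = ((s:ℝ)+1) * ((s:ℝ)+1)^(a-1) := by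
      conv_lhs => rw [show a = 1 + (a-1) from (Nat.add_sub_cancel' ha).symm]
      rw [pow_add, pow_one]
    have h2 : ((s:ℝ)+1)^(a-1) ≤ ((2:ℝ)^(a-1))^s := by
      have hn : (s+1 : ℕ)^(a-1) ≤ ((2:ℕ)^s)^(a-1) :=
        Nat.pow_le_pow_left (Nat.lt_two_pow_self (n := s)) (a-1)
      calc ((s:ℝ)+1)^(a-1) ≤ ((2:ℝ)^s)^(a-1) := by exact_mod_cast hn
        _ = ((2:ℝ)^(a-1))^s := by rw [← pow_mul, ← pow_mul, Nat.mul_comm]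
    have hL' : L (s+1) = Real.exp (-μ) * μ * m *
        ((((s:ℝ)+1)^(a-1) * ((m:ℝ)*μ)^s) / s.factorial) := by
      simp only [hL, poissonP]
      push_cast
      rw [hfac, hpow, pow_succ, pow_succ, mul_pow]
      have hs0 : ((s.factorial : ℕ):ℝ) ≠ 0 := by positivity
      have hsp : ((s:ℝ)+1) ≠ 0 := by positivity
      field_simp
    rw [hL']
    gcongr
    calc ((s:ℝ)+1)^(a-1) * ((m:ℝ)*μ)^s ≤ ((2:ℝ)^(a-1))^s * ((m:ℝ)*μ)^s := by gcongr
      _ = (c*μ)^s := by rw [hcdef, mul_pow, mul_pow, mul_pow]; ring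
  have hsumL1 : Summable (fun s : ℕ => L (s+1)) := (summable_nat_add_iff 1).mpr hsumL
  have hsumg : Summable (fun s : ℕ => Real.exp (-μ) * μ * m * ((c*μ)^s / s.factorial)) :=
    (Real.summable_pow_div_factorial _).mul_left _
  have hL0 : L 0 = 0 := by
    simp [hL, poissonP, zero_pow (by omega : a ≠ 0)]
  calc (∑' r : ℕ, L r) = L 0 + ∑' s : ℕ, L (s+1) := Summable.tsum_eq_zero_add hsumL
    _ = ∑' s : ℕ, L (s+1) := by rw [hL0, zero_add]
    _ ≤ ∑' s : ℕ, Real.exp (-μ) * μ * m * ((c*μ)^s / s.factorial) :=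
        Summable.tsum_le_tsum key hsumL1 hsumg
    _ = Real.exp (-μ) * μ * m * Real.exp (c*μ) := by
        rw [tsum_mul_left, ← exp_tsum]
    _ ≤ Real.exp ((2 : ℝ) ^ a * m) / j := by
        have ha2 : (2:ℝ)^a = 2 * 2^(a-1) := by
          conv_lhs => rw [show a = 1 + (a-1) by omega]
          rw [pow_add, pow_one]
        have h2c : (2:ℝ)^a * m = c + c := by rw [hcdef, ha2]; ring
        have e1 : Real.exp (-μ) ≤ 1 := Real.exp_le_one_iff.mpr (by linarith)
        have e2 : (m:ℝ) ≤ Real.exp c := by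
          have := Real.add_one_le_exp (m:ℝ)
          have := Real.exp_le_exp.mpr hcm
          linarith
        have e3 : Real.exp (c*μ) ≤ Real.exp c := by
          apply Real.exp_le_exp.mpr
          nlinarith
        have hexp : Real.exp (-μ) * m * Real.exp (c*μ) ≤ Real.exp ((2:ℝ)^a * m) := by
          rw [h2c, Real.exp_add]
          have h1 : Real.exp (-μ) * m ≤ Real.exp c := by
            nlinarith [Real.exp_pos (-μ), Real.exp_pos c]
          nlinarith [Real.exp_pos (c*μ), Real.exp_pos c]
        calc Real.exp (-μ) * μ * m * Real.exp (c*μ)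
            = Real.exp (-μ) * m * Real.exp (c*μ) * μ := by ring
          _ ≤ Real.exp ((2:ℝ)^a * m) * μ := mul_le_mul_of_nonneg_right hexp hμ0.le
          _ = Real.exp ((2:ℝ)^a * m) / j := by rw [hμdef]; ring
end
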